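/- Suppose f ∈ ℝ[x₁,…,xₙ] admits a degree d SONC certificate over H_P: f = Σ_{j=1}^{N} s_j H_j where each s_j is a SONC, each H_j is a finite product of polynomials from the family G = {g₁,…,gₙ, −g₁,…,−gₙ} ∪ {x_j − a_j, b_j − x_j : j ∈ [n]} ∪ P (with |P| = m), and deg(s_j H_j) ≤ d for every j. Then f admits a degree d SONC certificate of the same form in which the total number of nonnegative circuit polynomials appearing across all the SONCs is at most C(4n + m + d, d)·(C(n + d, d) + 1), where C(·,·) denotes the binomial coefficient. -/

import Mathlib

open MvPolynomial Finset
open scoped Classical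
noncomputable section
namespace SC
variable {n : ℕ}

lemma homComp_monomial (k : ℕ) (α : Fin n →₀ ℕ) (c : ℝ) :
    homogeneousComponent k (monomial α c) =
      if α.degree = k then monomial α c else 0 := by
  ext β
  rw [coeff_homogeneousComponent]
  by_cases h : β = α
  · subst h; split_ifs with h1 h2 <;> simp_all [coeff_monomial]
  · simp only [coeff_monomial, Ne.symm h, if_neg]
    split_ifs <;> simp_all [coeff_monomial, Ne.symm h]

def psi (v : Fin n → ℝ) : MvPolynomial (Fin n) ℝ →ₐ[ℝ] Polynomial ℝ :=
  MvPolynomial.aeval (fun i => Polynomial.C (v i) * Polynomial.X)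

lemma coeff_psi (v : Fin n → ℝ) (p : MvPolynomial (Fin n) ℝ) (k : ℕ) :
    (psi v p).coeff k = eval v (homogeneousComponent k p) := by
  induction p using MvPolynomial.induction_on' with
  | monomial α c =>
      rw [psi, aeval_monomial, homComp_monomial]
      have h1 : (α.prod fun i k => (Polynomial.C (v i) * Polynomial.X)^k)
          = Polynomial.C (α.prod fun i k => v i ^ k) * Polynomial.X ^ α.degree := by
        rw [Finsupp.prod, Finsupp.prod, Finsupp.degree]
        simp only [mul_pow, Finset.prod_mul_distrib, ← Polynomial.C_pow, ← map_prod,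
          Finset.prod_pow_eq_pow_sum]
        rfl
      rw [h1, ← mul_assoc, Polynomial.algebraMap_eq, ← map_mul, Polynomial.coeff_C_mul,
        Polynomial.coeff_X_pow]
      split_ifs with h1 h2 h3
      · simp [eval_monomial, algebraMap_eq]
      · exact absurd h1.symm h2
      · exact absurd h3.symm h1
      · simp
  | add p q hp hq =>
      simp [map_add, hp, hq]

lemma natDegree_psi_le (v : Fin n → ℝ) (p : MvPolynomial (Fin n) ℝ) :
    (psi v p).natDegree ≤ p.totalDegree := by
  apply Polynomial.natDegree_le_iff_coeff_eq_zero.2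
  intro k hk
  rw [coeff_psi, homogeneousComponent_eq_zero _ _ hk, map_zero]

lemma eval_psi (v : Fin n → ℝ) (p : MvPolynomial (Fin n) ℝ) (s : ℝ) :
    (psi v p).eval s = eval (fun i => s * v i) p := by
  have h : (Polynomial.aeval s).comp (psi v) = (MvPolynomial.aeval fun i => s * v i) := by
    apply MvPolynomial.algHom_ext
    intro i
    simp only [AlgHom.comp_apply, psi, aeval_X, map_mul, Polynomial.aeval_C,
      Polynomial.aeval_X, Polynomial.algebraMap_eq]
    ring_nf
    simp [mul_comm]
  have h2 := congrArg (fun φ => φ p) h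
  simp only [AlgHom.comp_apply] at h2
  have e1 : Polynomial.eval s ((psi v) p) = Polynomial.aeval s ((psi v) p) := by
    rw [Polynomial.coe_aeval_eq_eval]
  have e2 : (eval fun i => s * v i) p = (aeval fun i => s * v i) p := by
    rw [← MvPolynomial.coe_aeval_eq_eval]; rfl
  rw [e1, e2]; exact h2

lemma homComp_top_ne_zero {p : MvPolynomial (Fin n) ℝ} (hp : p ≠ 0) :
    homogeneousComponent p.totalDegree p ≠ 0 := by
  obtain ⟨α, hα, hdeg⟩ : ∃ α ∈ p.support, (α.sum fun _ e => e) = p.totalDegree := by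
    obtain ⟨α, hα, h⟩ := Finset.exists_mem_eq_sup p.support
      (support_nonempty.2 hp) (fun α => α.sum fun _ e => e)
    exact ⟨α, hα, h.symm⟩
  intro h0
  have := coeff_homogeneousComponent (σ := Fin n) (R := ℝ) p.totalDegree p α
  rw [h0] at this
  simp only [coeff_zero] at this
  rw [if_pos] at this
  · exact (mem_support_iff.1 hα) this.symm
  · exact hdeg

lemma exists_eval_ne_zero {p : MvPolynomial (Fin n) ℝ} (hp : p ≠ 0) :
    ∃ v : Fin n → ℝ, eval v p ≠ 0 := by
  by_contra h
  push_neg at h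
  exact hp (MvPolynomial.funext fun x => by simp [h x])

lemma leadingCoeff_pos {P : Polynomial ℝ} (h0 : 0 < P.natDegree)
    (hnn : ∀ x : ℝ, 0 ≤ P.eval x) : 0 < P.leadingCoeff := by
  have hP : P ≠ 0 := fun h => by simp [h] at h0
  rcases lt_trichotomy P.leadingCoeff 0 with h | h | h
  · exfalso
    have hdeg : 0 < P.degree := by
      rwa [Polynomial.natDegree_pos_iff_degree_pos] at h0
    have := Polynomial.tendsto_atBot_of_leadingCoeff_nonpos P hdeg h.le
    obtain ⟨x, hx⟩ := (this.eventually (Filter.eventually_lt_atBot 0)).exists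
    exact absurd (hnn x) (not_le.2 hx)
  · exact absurd h (Polynomial.leadingCoeff_ne_zero.2 hP)
  · exact h

/-- Pointwise bound implies degree bound. -/
lemma totalDegree_le_of_pointwise {p q : MvPolynomial (Fin n) ℝ}
    (hp : ∀ x, 0 ≤ eval x p) (hpq : ∀ x, eval x p ≤ eval x q) :
    p.totalDegree ≤ q.totalDegree := by
  by_contra hlt
  push_neg at hlt
  have hp0 : p ≠ 0 := by rintro rfl; simp at hlt
  obtain ⟨v, hv⟩ := exists_eval_ne_zero (homComp_top_ne_zero hp0)
  set D := p.totalDegree with hD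
  have hcoeff : (psi v p).coeff D ≠ 0 := by rwa [coeff_psi]
  have hdegA : (psi v p).natDegree = D :=
    le_antisymm (natDegree_psi_le v p) (Polynomial.le_natDegree_of_ne_zero hcoeff)
  have hDpos : 0 < D := lt_of_le_of_lt (Nat.zero_le _) hlt
  -- the polynomial R := psi v q - psi v p is nonneg with negative leading coeff
  set A := psi v p with hA
  set B := psi v q with hB
  have hBD : B.natDegree < D := lt_of_le_of_lt (natDegree_psi_le v q) hlt
  have hRD : (B - A).coeff D = - A.coeff D := by
    rw [Polynomial.coeff_sub, Polynomial.coeff_eq_zero_of_natDegree_lt hBD, zero_sub]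
  have hRdeg : (B - A).natDegree = D := by
    apply le_antisymm
    · exact le_trans (Polynomial.natDegree_sub_le B A) (max_le hBD.le hdegA.le)
    · apply Polynomial.le_natDegree_of_ne_zero
      rw [hRD]; simpa using hcoeff
  have hApos : 0 < A.leadingCoeff := by
    apply leadingCoeff_pos (hdegA ▸ hDpos)
    intro x
    rw [hA, eval_psi]
    exact hp _
  have hRpos : 0 < (B - A).leadingCoeff := by
    apply leadingCoeff_pos (hRdeg ▸ hDpos)
    intro x
    simp only [Polynomial.eval_sub, hA, hB, eval_psi, sub_nonneg]
    exact hpq _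
  rw [Polynomial.leadingCoeff, hRdeg, hRD] at hRpos
  rw [Polynomial.leadingCoeff, hdegA] at hApos
  linarith

/-- Degree additivity (one direction) for products of nonzero polynomials. -/
lemma le_totalDegree_mul {p q : MvPolynomial (Fin n) ℝ} (hp : p ≠ 0) (hq : q ≠ 0) :
    p.totalDegree + q.totalDegree ≤ (p * q).totalDegree := by
  have hpq : homogeneousComponent p.totalDegree p * homogeneousComponent q.totalDegree q ≠ 0 :=
    mul_ne_zero (homComp_top_ne_zero hp) (homComp_top_ne_zero hq)
  obtain ⟨v, hv⟩ := exists_eval_ne_zero hpq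
  rw [map_mul] at hv
  have hvp : eval v (homogeneousComponent p.totalDegree p) ≠ 0 := left_ne_zero_of_mul hv
  have hvq : eval v (homogeneousComponent q.totalDegree q) ≠ 0 := right_ne_zero_of_mul hv
  have hdp : (psi v p).natDegree = p.totalDegree :=
    le_antisymm (natDegree_psi_le v p)
      (Polynomial.le_natDegree_of_ne_zero (by rwa [coeff_psi]))
  have hdq : (psi v q).natDegree = q.totalDegree :=
    le_antisymm (natDegree_psi_le v q)
      (Polynomial.le_natDegree_of_ne_zero (by rwa [coeff_psi]))
  have hA : psi v p ≠ 0 := fun h => hvp (by rw [← coeff_psi, h, Polynomial.coeff_zero])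
  have hB : psi v q ≠ 0 := fun h => hvq (by rw [← coeff_psi, h, Polynomial.coeff_zero])
  calc p.totalDegree + q.totalDegree = (psi v p * psi v q).natDegree := by
        rw [Polynomial.natDegree_mul hA hB, hdp, hdq]
    _ = (psi v (p * q)).natDegree := by rw [map_mul]
    _ ≤ (p * q).totalDegree := natDegree_psi_le v _

lemma carath_aux {ι : Type*} [Fintype ι] {V : Type*} [AddCommGroup V] [Module ℝ V]
    (w : ι → V) : ∀ (m : ℕ) (c : ι → ℝ),
    (Finset.univ.filter fun i => c i ≠ 0).card ≤ m → (∀ i, 0 ≤ c i) →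
    ∃ c' : ι → ℝ, (∀ i, 0 ≤ c' i) ∧ (∀ i, c' i ≠ 0 → c i ≠ 0) ∧
      (∑ i, c' i • w i = ∑ i, c i • w i) ∧
      LinearIndependent ℝ (fun i : {i // c' i ≠ 0} => w i.1) := by
  intro m
  induction m with
  | zero =>
      intro c hcard hc
      refine ⟨c, hc, fun i hi => hi, rfl, ?_⟩
      have : ∀ i, c i = 0 := by
        intro i
        by_contra hi
        have : i ∈ Finset.univ.filter fun i => c i ≠ 0 := by simp [hi]
        have := Finset.card_pos.2 ⟨i, this⟩
        omega
      have : IsEmpty {i // c i ≠ 0} := ⟨fun i => i.2 (this i.1)⟩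
      exact linearIndependent_empty_type
  | succ m ih =>
      intro c hcard hc
      by_cases hind : LinearIndependent ℝ (fun i : {i // c i ≠ 0} => w i.1)
      · exact ⟨c, hc, fun i hi => hi, rfl, hind⟩
      obtain ⟨g, hgsum, i₁, hgi₁⟩ := Fintype.not_linearIndependent_iff.1 hind
      have hex : ∃ g : {i // c i ≠ 0} → ℝ, (∑ i, g i • w i.1 = 0) ∧ ∃ i, 0 < g i := by
        by_cases hpos : ∃ i, 0 < g i
        · exact ⟨g, hgsum, hpos⟩
        · push_neg at hpos
          refine ⟨-g, by simpa using hgsum, i₁, ?_⟩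
          have := hpos i₁
          simp only [Pi.neg_apply]
          cases lt_or_eq_of_le this with
          | inl h => linarith
          | inr h => exact absurd h hgi₁
      clear hgsum hgi₁ hind g
      obtain ⟨g, hgsum, hgpos⟩ := hex
      set ρ : ι → ℝ := fun i => if h : c i ≠ 0 then g ⟨i, h⟩ else 0 with hρ
      have hρc : ∀ i, c i = 0 → ρ i = 0 := by
        intro i hi; simp [hρ, hi]
      have hρsum : ∑ i, ρ i • w i = 0 := by
        have h1 : ∑ i ∈ Finset.univ.filter (fun i => c i ≠ 0), ρ i • w i
            = ∑ i, ρ i • w i := by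
          apply Finset.sum_filter_of_ne
          intro x _ hx
          intro h0
          apply hx
          rw [hρc x h0, zero_smul]
        have h2 : ∑ i ∈ Finset.univ.filter (fun i => c i ≠ 0), ρ i • w i
            = ∑ i : {i // c i ≠ 0}, ρ i.1 • w i.1 := by
          apply Finset.sum_subtype
          intro x; simp
        rw [← h1, h2, ← hgsum]
        apply Finset.sum_congr rfl
        intro i _
        rw [hρ]
        simp only [i.2, dif_pos, ne_eq, not_false_iff]
      -- pick the minimizer
      have hTne : (Finset.univ.filter fun i => 0 < ρ i).Nonempty := by
        obtain ⟨i, hi⟩ := hgpos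
        exact ⟨i.1, by simp [hρ, i.2, hi]⟩
      obtain ⟨i₀, hi₀mem, hi₀min⟩ := Finset.exists_min_image _ (fun i => c i / ρ i) hTne
      simp only [Finset.mem_filter, Finset.mem_univ, true_and] at hi₀mem
      have hci₀ : c i₀ ≠ 0 := by
        intro h0; rw [hρc i₀ h0] at hi₀mem; exact lt_irrefl 0 hi₀mem
      set τ := c i₀ / ρ i₀ with hτ
      have hτpos : 0 < τ := div_pos (lt_of_le_of_ne (hc i₀) (Ne.symm hci₀)) hi₀mem
      set c'' : ι → ℝ := fun i => c i - τ * ρ i with hc''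
      have hc''nn : ∀ i, 0 ≤ c'' i := by
        intro i
        rw [hc'']
        by_cases hρi : 0 < ρ i
        · have := hi₀min i (by simp [hρi])
          have : τ * ρ i ≤ c i := by
            rw [hτ]
            calc (c i₀ / ρ i₀) * ρ i ≤ (c i / ρ i) * ρ i := by
                  apply mul_le_mul_of_nonneg_right this hρi.le
              _ = c i := div_mul_cancel₀ _ (ne_of_gt hρi)
          simp only; linarith
        · push_neg at hρi
          have : 0 ≤ -(τ * ρ i) := by
            rw [neg_nonneg]
            exact mul_nonpos_of_nonneg_of_nonpos hτpos.le hρi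
          have := hc i
          simp only; linarith
      have hsub : ∀ i, c'' i ≠ 0 → c i ≠ 0 := by
        intro i hi h0
        apply hi
        have he : c'' i = c i - τ * ρ i := rfl
        rw [he, hρc i h0, h0]; ring
      have hi₀zero : c'' i₀ = 0 := by
        have he : c'' i₀ = c i₀ - τ * ρ i₀ := rfl
        rw [he, hτ, div_mul_cancel₀ _ (ne_of_gt hi₀mem)]; ring
      have hcard'' : (Finset.univ.filter fun i => c'' i ≠ 0).card ≤ m := by
        have hss : (Finset.univ.filter fun i => c'' i ≠ 0) ⊆
            (Finset.univ.filter fun i => c i ≠ 0).erase i₀ := by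
          intro i hi
          simp only [Finset.mem_filter, Finset.mem_univ, true_and] at hi
          rw [Finset.mem_erase]
          refine ⟨?_, by simp [hsub i hi]⟩
          rintro rfl
          exact hi hi₀zero
        have h1 := Finset.card_le_card hss
        have h2 : i₀ ∈ Finset.univ.filter fun i => c i ≠ 0 := by simp [hci₀]
        have h3 := Finset.card_erase_of_mem h2
        omega
      obtain ⟨c', h1, h2, h3, h4⟩ := ih c'' hcard'' hc''nn
      refine ⟨c', h1, fun i hi => hsub i (h2 i hi), ?_, h4⟩
      rw [h3, hc'']
      simp only [sub_smul, Finset.sum_sub_distrib, mul_smul]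
      rw [← Finset.smul_sum, hρsum, smul_zero, sub_zero]
/-- The finset of exponent vectors of total degree at most `d`. -/
def Mons (n d : ℕ) : Finset (Fin n →₀ ℕ) :=
  (Finset.Iic (Finsupp.equivFunOnFinite.symm (fun _ : Fin n => d))).filter
    (fun α => α.degree ≤ d)

lemma mem_Mons {d : ℕ} {α : Fin n →₀ ℕ} (h : α.degree ≤ d) : α ∈ Mons n d := by
  refine Finset.mem_filter.2 ⟨Finset.mem_Iic.2 ?_, h⟩
  intro i
  calc α i ≤ α.degree := by
        rw [Finsupp.degree]
        by_cases hi : i ∈ α.support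
        · exact Finset.single_le_sum (fun _ _ => Nat.zero_le _) hi
        · simp [Finsupp.notMem_support_iff.1 hi]
    _ ≤ d := h
  -- the `≤` on Finsupp is pointwise

lemma card_Mons (n d : ℕ) : (Mons n d).card ≤ (n + d).choose d := by
  have hcard : Fintype.card (Sym (Fin (n + 1)) d) = (n + d).choose d := by
    rw [Sym.card_sym_eq_choose, Fintype.card_fin]
    congr 1
    omega
  rw [← hcard, ← Finset.card_univ]
  apply Finset.card_le_card_of_injOn
    (fun α => (if h : α.degree ≤ d then
      Sym.mk (Multiset.map Fin.castSucc (Finsupp.toMultiset α) +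
        Multiset.replicate (d - α.degree) (Fin.last n)) (by
          simp only [Multiset.card_add, Multiset.card_map, Multiset.card_replicate,
            Finsupp.card_toMultiset]
          have : (α.sum fun _ => id) = α.degree := by
            rw [Finsupp.degree_apply, Finsupp.sum]; rfl
          omega)
      else Sym.mk (Multiset.replicate d (Fin.last n)) (by simp) : Sym (Fin (n + 1)) d))
  · intro α hα; exact Finset.mem_univ _
  · intro α hα β hβ hab
    dsimp only at hab
    rw [dif_pos (Finset.mem_filter.1 (Finset.mem_coe.1 hα)).2,
      dif_pos (Finset.mem_filter.1 (Finset.mem_coe.1 hβ)).2] at hab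
    have h1 := congrArg Subtype.val hab
    simp only at h1
    ext i
    have h2 := congrArg (Multiset.count (Fin.castSucc i)) h1
    have hne : (Fin.castSucc i : Fin (n+1)) ≠ Fin.last n := Fin.ne_of_lt (Fin.castSucc_lt_last i)
    simp only [Multiset.count_add, Multiset.count_replicate, if_neg (Ne.symm hne), add_zero] at h2
    rw [Multiset.count_map_eq_count' _ _ (Fin.castSucc_injective n),
      Multiset.count_map_eq_count' _ _ (Fin.castSucc_injective n),
      Finsupp.count_toMultiset, Finsupp.count_toMultiset] at h2
    exact h2
lemma card_le_of_indep {d : ℕ} {ι : Type*} [Fintype ι] (w : ι → MvPolynomial (Fin n) ℝ)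
    (hdeg : ∀ i, (w i).totalDegree ≤ d)
    (hind : LinearIndependent ℝ w) : Fintype.card ι ≤ (n + d).choose d := by
  set s : Finset (MvPolynomial (Fin n) ℝ) := (Mons n d).image (fun α => monomial α (1:ℝ))
    with hs
  have hmem : ∀ i, w i ∈ Submodule.span ℝ (s : Set (MvPolynomial (Fin n) ℝ)) := by
    intro i
    rw [(w i).as_sum]
    apply Submodule.sum_mem
    intro α hα
    have hαM : α ∈ Mons n d := by
      apply mem_Mons
      have h1 : (α.sum fun _ e => e) ≤ (w i).totalDegree := le_totalDegree hα
      have h2 : α.degree = α.sum fun _ e => e := by rw [Finsupp.degree, Finsupp.sum]; rfl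
      rw [h2]
      exact le_trans h1 (hdeg i)
    have he : monomial α (coeff α (w i)) = (coeff α (w i)) • monomial α (1:ℝ) := by
      rw [smul_monomial, smul_eq_mul, mul_one]
    rw [he]
    exact Submodule.smul_mem _ _ (Submodule.subset_span
      (Finset.mem_coe.2 (Finset.mem_image_of_mem _ hαM)))
  set W := Submodule.span ℝ (s : Set (MvPolynomial (Fin n) ℝ)) with hW
  haveI : FiniteDimensional ℝ W := FiniteDimensional.span_finset ℝ s
  set w' : ι → W := fun i => ⟨w i, hmem i⟩ with hw'
  have hind' : LinearIndependent ℝ w' := by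
    apply LinearIndependent.of_comp W.subtype
    exact hind
  calc Fintype.card ι ≤ Module.finrank ℝ W := hind'.fintype_card_le_finrank
    _ ≤ s.card := finrank_span_finset_le_card s
    _ ≤ (Mons n d).card := Finset.card_image_le
    _ ≤ (n + d).choose d := card_Mons n d
end SC

/-- A circuit polynomial in `n` variables. -/
def IsCircuitPoly (n : ℕ) (f : MvPolynomial (Fin n) ℝ) : Prop :=
  ∃ (r : ℕ) (α : Fin (r + 1) → (Fin n →₀ ℕ)) (β : Fin n →₀ ℕ)
    (cf : Fin (r + 1) → ℝ) (c : ℝ) (lam : Fin (r + 1) → ℝ),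
    r ≤ n ∧
    (∀ j, 0 < cf j) ∧
    (∀ j i, Even (α j i)) ∧
    AffineIndependent ℝ (fun j (i : Fin n) => ((α j i : ℕ) : ℝ)) ∧
    (∀ j, 0 < lam j) ∧ (∑ j, lam j) = 1 ∧
    (∀ i, ((β i : ℕ) : ℝ) = ∑ j, lam j * ((α j i : ℕ) : ℝ)) ∧
    f = (∑ j, monomial (α j) (cf j)) + monomial β c

/-- A nonnegative circuit polynomial. -/
def IsNNCircuit (n : ℕ) (f : MvPolynomial (Fin n) ℝ) : Prop :=
  IsCircuitPoly n f ∧ ∀ x : Fin n → ℝ, 0 ≤ eval x f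

/-- A sum of nonnegative circuit polynomials (no degree bound). -/
def IsSONC (n : ℕ) (f : MvPolynomial (Fin n) ℝ) : Prop :=
  ∃ (k : ℕ) (μ : Fin k → ℝ) (p : Fin k → MvPolynomial (Fin n) ℝ),
    (∀ i, 0 ≤ μ i) ∧ (∀ i, IsNNCircuit n (p i)) ∧
    f = ∑ i, C (μ i) * p i

/-- A SONC built from nonnegative circuit polynomials of degree at most `D`. -/
def IsSONCOfDeg (n D : ℕ) (f : MvPolynomial (Fin n) ℝ) : Prop :=
  ∃ (k : ℕ) (μ : Fin k → ℝ) (p : Fin k → MvPolynomial (Fin n) ℝ),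
    (∀ i, 0 ≤ μ i) ∧ (∀ i, IsNNCircuit n (p i) ∧ (p i).totalDegree ≤ D) ∧
    f = ∑ i, C (μ i) * p i

/-- The SONC cone `C_{n,D}`. -/
def InSONCCone (n D : ℕ) (f : MvPolynomial (Fin n) ℝ) : Prop :=
  f.totalDegree ≤ D ∧ IsSONCOfDeg n D f

/-- The quadratic hypercube constraint `g_j(x) = (x_j − a_j)(x_j − b_j)`. -/
def gpoly {n : ℕ} (a b : Fin n → ℝ) (j : Fin n) : MvPolynomial (Fin n) ℝ :=
  (X j - C (a j)) * (X j - C (b j))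

/-- The Kronecker delta polynomial `δ_v` of a vertex `v` of the hypercube
`∏_j {a_j, b_j}`. -/
def kron {n : ℕ} (a b : Fin n → ℝ) (v : Fin n → ℝ) : MvPolynomial (Fin n) ℝ :=
  ∏ j, if v j = a j then C (1 / (b j - a j)) * (C (b j) - X j)
       else C (1 / (b j - a j)) * (X j - C (a j))

/-- The vertex of the hypercube `∏_j {a_j, b_j}` encoded by `ε : Fin n → Bool`. -/
def vtx {n : ℕ} (a b : Fin n → ℝ) (ε : Fin n → Bool) : Fin n → ℝ :=
  fun j => if ε j then b j else a j

/-- The family `G = {g₁,…,gₙ, −g₁,…,−gₙ} ∪ {x_j − a_j, b_j − x_j : j} ∪ P` of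
polynomials from which the products in a SONC certificate are formed. -/
def certFamily {n : ℕ} (a b : Fin n → ℝ) (P : Finset (MvPolynomial (Fin n) ℝ)) :
    Set (MvPolynomial (Fin n) ℝ) :=
  {q | (∃ j, q = gpoly a b j ∨ q = - gpoly a b j ∨
        q = X j - C (a j) ∨ q = C (b j) - X j) ∨ q ∈ P}

set_option maxHeartbeats 1000000 in
/-- If `f` admits a degree `d` SONC certificate over the
constrained hypercube, then it admits one of the same form in which the total
number of nonnegative circuit polynomials appearing across all the SONCs is at
most `C(4n + m + d, d)·(C(n + d, d) + 1)`, where `m = |P|`. -/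
theorem short_degree_d_SONC_certificate
    (n d : ℕ) (a b : Fin n → ℝ) (hab : ∀ j, a j < b j)
    (P : Finset (MvPolynomial (Fin n) ℝ)) (hP : ∀ p ∈ P, p.totalDegree ≤ d)
    (f : MvPolynomial (Fin n) ℝ)
    (hcert : ∃ (N : ℕ) (s Hp : Fin N → MvPolynomial (Fin n) ℝ),
      (∀ j, IsSONC n (s j)) ∧
      (∀ j, ∃ L : List (MvPolynomial (Fin n) ℝ),
        (∀ q ∈ L, q ∈ certFamily a b P) ∧ Hp j = L.prod) ∧
      (∀ j, (s j * Hp j).totalDegree ≤ d) ∧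
      f = ∑ j, s j * Hp j) :
    ∃ (N : ℕ) (k : Fin N → ℕ)
      (μ : (j : Fin N) → Fin (k j) → ℝ)
      (q : (j : Fin N) → Fin (k j) → MvPolynomial (Fin n) ℝ)
      (Hp : Fin N → MvPolynomial (Fin n) ℝ),
      (∀ j i, 0 ≤ μ j i) ∧
      (∀ j i, IsNNCircuit n (q j i)) ∧
      (∀ j, ∃ L : List (MvPolynomial (Fin n) ℝ),
        (∀ r ∈ L, r ∈ certFamily a b P) ∧ Hp j = L.prod) ∧
      (∀ j, ((∑ i, C (μ j i) * q j i) * Hp j).totalDegree ≤ d) ∧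
      (∑ j, k j) ≤ Nat.choose (4 * n + P.card + d) d * (Nat.choose (n + d) d + 1) ∧
      f = ∑ j, (∑ i, C (μ j i) * q j i) * Hp j := by
  classical
  obtain ⟨N0, s, Hp0, hS, hH, hdeg, hf⟩ := hcert
  choose k μ0 p hμ hp hs using hS
  set ι := (j : Fin N0) × Fin (k j) with hι
  set c : ι → ℝ := fun t => μ0 t.1 t.2 with hcdef
  have hc : ∀ t, 0 ≤ c t := fun t => hμ t.1 t.2
  set W : ι → MvPolynomial (Fin n) ℝ :=
    fun t => if c t = 0 then 0 else p t.1 t.2 * Hp0 t.1 with hWdef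
  -- pointwise term bound inside each SONC
  have hterm : ∀ (j : Fin N0) (i : Fin (k j)) (x : Fin n → ℝ),
      μ0 j i * eval x (p j i) ≤ eval x (s j) := by
    intro j i x
    rw [hs j, map_sum]
    simp only [map_mul, eval_C]
    exact Finset.single_le_sum
      (f := fun i => μ0 j i * eval x (p j i))
      (fun i _ => mul_nonneg (hμ j i) ((hp j i).2 x)) (Finset.mem_univ i)
  -- all the (nonzero-coefficient) vectors have total degree at most d
  have hWdeg : ∀ t : ι, (W t).totalDegree ≤ d := by
    intro t
    obtain ⟨j, i⟩ := t
    by_cases h0 : c ⟨j, i⟩ = 0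
    · simp [hWdef, h0]
    have hWt : W ⟨j, i⟩ = p j i * Hp0 j := by simp [hWdef, h0]
    rw [hWt]
    by_cases hH0 : Hp0 j = 0
    · simp [hH0]
    by_cases hp0 : p j i = 0
    · simp [hp0]
    have hμpos : 0 < μ0 j i := lt_of_le_of_ne (hμ j i) (Ne.symm h0)
    have hs0 : s j ≠ 0 := by
      intro hzero
      apply hp0
      apply MvPolynomial.funext
      intro x
      have h1 := hterm j i x
      rw [hzero, map_zero] at h1
      have h2 := (hp j i).2 x
      have : μ0 j i * eval x (p j i) = 0 :=
        le_antisymm h1 (mul_nonneg (hμ j i) h2)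
      have := (mul_eq_zero.1 this).resolve_left (ne_of_gt hμpos)
      simpa using this
    have hdp : (p j i).totalDegree ≤ (s j).totalDegree := by
      have h1 : ∀ x, 0 ≤ eval x (C (μ0 j i) * p j i) := by
        intro x
        rw [map_mul, eval_C]
        exact mul_nonneg (hμ j i) ((hp j i).2 x)
      have h2 : ∀ x, eval x (C (μ0 j i) * p j i) ≤ eval x (s j) := by
        intro x
        rw [map_mul, eval_C]
        exact hterm j i x
      have h3 := SC.totalDegree_le_of_pointwise h1 h2
      have h4 : (p j i).totalDegree ≤ (C (μ0 j i) * p j i).totalDegree := by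
        have he : p j i = C (μ0 j i)⁻¹ * (C (μ0 j i) * p j i) := by
          rw [← mul_assoc, ← C_mul, inv_mul_cancel₀ h0, C_1, one_mul]
        conv_lhs => rw [he]
        refine le_trans (totalDegree_mul _ _) ?_
        rw [totalDegree_C, zero_add]
      exact le_trans h4 h3
    calc (p j i * Hp0 j).totalDegree
        ≤ (p j i).totalDegree + (Hp0 j).totalDegree := totalDegree_mul _ _
      _ ≤ (s j).totalDegree + (Hp0 j).totalDegree := Nat.add_le_add_right hdp _
      _ ≤ (s j * Hp0 j).totalDegree := SC.le_totalDegree_mul hs0 hH0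
      _ ≤ d := hdeg j
  -- f as a conic combination of the vectors W
  have hfW : f = ∑ t : ι, c t • W t := by
    have hsig : (∑ t : ι, c t • W t)
        = ∑ j : Fin N0, ∑ i : Fin (k j), c ⟨j, i⟩ • W ⟨j, i⟩ := by
      rw [← Finset.univ_sigma_univ, Finset.sum_sigma]
    rw [hf, hsig]
    apply Finset.sum_congr rfl
    intro j _
    rw [hs j, Finset.sum_mul]
    apply Finset.sum_congr rfl
    intro i _
    by_cases h0 : c ⟨j, i⟩ = 0
    · have : μ0 j i = 0 := h0
      simp [hWdef, h0, this]
    · have hWt : W ⟨j, i⟩ = p j i * Hp0 j := by simp [hWdef, h0]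
      rw [hWt, MvPolynomial.smul_eq_C_mul, ← mul_assoc]
  -- conic Caratheodory
  obtain ⟨c', hc'0, hc'supp, hsum, hind⟩ := SC.carath_aux W
    (Finset.univ.filter fun t => c t ≠ 0).card c le_rfl hc
  set S := Finset.univ.filter (fun t => c' t ≠ 0) with hSdef
  set N := S.card with hN
  set e : Fin N ≃ {x // x ∈ S} := S.equivFin.symm with he
  have hcard : N ≤ (n + d).choose d := by
    have hcard1 : Fintype.card {t // c' t ≠ 0} = N := by
      rw [hN, hSdef, Fintype.card_subtype]
    rw [← hcard1]
    exact SC.card_le_of_indep (fun t : {t // c' t ≠ 0} => W t.1)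
      (fun t => hWdeg t.1) hind
  have hmemS : ∀ j : Fin N, c' (e j).1 ≠ 0 := by
    intro j
    exact (Finset.mem_filter.1 (e j).2).2
  have hWS : ∀ j : Fin N, W (e j).1 = p (e j).1.1 (e j).1.2 * Hp0 (e j).1.1 := by
    intro j
    have hcne : c (e j).1 ≠ 0 := hc'supp _ (hmemS j)
    simp [hWdef, hcne]
  refine ⟨N, fun _ => 1, fun j _ => c' (e j).1,
    fun j _ => p (e j).1.1 (e j).1.2, fun j => Hp0 (e j).1.1,
    fun j _ => hc'0 _, fun j _ => hp _ _, fun j => hH _, ?_, ?_, ?_⟩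
  · -- degree bound on each block
    intro j
    have hsum1 : (∑ i : Fin 1, C (c' (e j).1) * p (e j).1.1 (e j).1.2)
        = C (c' (e j).1) * p (e j).1.1 (e j).1.2 := by
      rw [Fin.sum_univ_one]
    rw [hsum1, mul_assoc, ← hWS j]
    calc (C (c' (e j).1) * W (e j).1).totalDegree
        ≤ (C (c' (e j).1) : MvPolynomial (Fin n) ℝ).totalDegree
          + (W (e j).1).totalDegree := totalDegree_mul _ _
      _ = (W (e j).1).totalDegree := by rw [totalDegree_C, zero_add]
      _ ≤ d := hWdeg _
  · -- cardinality bound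
    have h1 : 0 < (4 * n + P.card + d).choose d :=
      Nat.choose_pos (Nat.le_add_left d _)
    have h2 : (∑ _j : Fin N, 1) = N := by simp
    rw [h2]
    calc N ≤ (n + d).choose d := hcard
      _ ≤ (n + d).choose d + 1 := Nat.le_succ _
      _ = 1 * ((n + d).choose d + 1) := (one_mul _).symm
      _ ≤ (4 * n + P.card + d).choose d * ((n + d).choose d + 1) :=
          Nat.mul_le_mul_right _ h1
  · -- the certificate identity
    have hstep : ∀ j : Fin N,
        (∑ i : Fin 1, C (c' (e j).1) * p (e j).1.1 (e j).1.2) * Hp0 (e j).1.1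
          = c' (e j).1 • W (e j).1 := by
      intro j
      rw [Fin.sum_univ_one, mul_assoc, ← hWS j, MvPolynomial.smul_eq_C_mul]
    rw [hfW, ← hsum]
    symm
    show (∑ j : Fin N, (∑ i : Fin 1, C (c' (e j).1) * p (e j).1.1 (e j).1.2) * Hp0 (e j).1.1)
      = ∑ t : ι, c' t • W t
    calc ∑ j : Fin N, (∑ i : Fin 1, C (c' (e j).1) * p (e j).1.1 (e j).1.2) * Hp0 (e j).1.1
        = ∑ j : Fin N, c' (e j).1 • W (e j).1 := by
          exact Finset.sum_congr rfl fun j _ => hstep j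
      _ = ∑ t : {x // x ∈ S}, c' t.1 • W t.1 :=
          Fintype.sum_equiv e _ _ (fun j => rfl)
      _ = ∑ t ∈ S, c' t • W t := Finset.sum_coe_sort S (fun t => c' t • W t)
      _ = ∑ t : ι, c' t • W t := by
          apply Finset.sum_filter_of_ne
          intro t _ h0 hc0
          apply h0
          rw [hc0, zero_smul]
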